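/- Let G = (V, E) be a finite undirected simple graph and let s ≥ 1 be an integer. Let I_1, …, I_k be pairwise disjoint subsets of V, each of which is an independent set of G. Then every F ⊆ I_1 ∪ ⋯ ∪ I_k that induces an s-bundle in G satisfies |F| ≤ Σ_{i=1}^{k} min(|I_i|, s) (the color-bound). -/
import Mathlib


open Finset

variable {V : Type*} [Fintype V] [DecidableEq V]

/-- `S` induces an `s`-bundle in `G`: for every `T ⊆ S` with `|T| < |S| - s`,
the subgraph of `G` induced on `S \ T` is connected. -/
def IsSBundle (G : SimpleGraph V) (s : ℕ) (S : Finset V) : Prop :=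
  ∀ T ⊆ S, (T.card : ℤ) < (S.card : ℤ) - (s : ℤ) →
    (G.induce (↑(S \ T) : Set V)).Connected

lemma reachable_eq_of_no_edges {W : Type*} {G : SimpleGraph W}
    (h : ∀ a b, ¬ G.Adj a b) {u v : W} (hr : G.Reachable u v) : u = v := by
  obtain ⟨p⟩ := hr
  cases p with
  | nil => rfl
  | cons h' _ => exact absurd h' (h _ _)

/-- Color-bound: if `I 1, …, I k` are pairwise disjoint independent sets,
then any `s`-bundle inside their union has at most `∑ i, min |I i| s` vertices. -/
theorem color_upper_bound (G : SimpleGraph V) (s k : ℕ) (hs : 1 ≤ s)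
    (I : Fin k → Finset V)
    (hdisj : ∀ i j, i ≠ j → Disjoint (I i) (I j))
    (hind : ∀ i, ∀ u ∈ I i, ∀ v ∈ I i, u ≠ v → ¬ G.Adj u v)
    (F : Finset V) (hFI : F ⊆ Finset.univ.biUnion I)
    (hF : IsSBundle G s F) :
    F.card ≤ ∑ i, min (I i).card s := by
  have key : ∀ i, (F ∩ I i).card ≤ s := by
    intro i
    by_contra hlt
    push_neg at hlt
    have hsum : (F \ I i).card + (F ∩ I i).card = F.card :=
      Finset.card_sdiff_add_card_inter F (I i)
    have hconn := hF (F \ I i) (Finset.sdiff_subset) (by push_cast; omega)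
    rw [Finset.sdiff_sdiff_self_left] at hconn
    have h2 : 1 < (F ∩ I i).card := by omega
    obtain ⟨u, hu, v, hv, huv⟩ := Finset.one_lt_card.mp h2
    have hr := hconn.preconnected
      ⟨u, by simpa using hu⟩ ⟨v, by simpa using hv⟩
    have : (⟨u, by simpa using hu⟩ : (↑(F ∩ I i) : Set V)) = ⟨v, by simpa using hv⟩ := by
      refine reachable_eq_of_no_edges ?_ hr
      rintro ⟨a, ha⟩ ⟨b, hb⟩ hab
      simp only [Finset.coe_mem, Set.mem_setOf_eq, Finset.mem_coe, Finset.mem_inter] at ha hb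
      exact hind i a ha.2 b hb.2 (fun hEq => hab.ne (by simp [hEq])) hab
    exact huv (congrArg Subtype.val this)
  have hFeq : F = Finset.univ.biUnion (fun i => F ∩ I i) := by
    apply Finset.Subset.antisymm
    · intro x hx
      obtain ⟨j, _, hj⟩ := Finset.mem_biUnion.mp (hFI hx)
      exact Finset.mem_biUnion.mpr ⟨j, Finset.mem_univ j, Finset.mem_inter.mpr ⟨hx, hj⟩⟩
    · intro x hx
      obtain ⟨j, _, hj⟩ := Finset.mem_biUnion.mp hx
      exact (Finset.mem_inter.mp hj).1
  have hcard : F.card = ∑ i, (F ∩ I i).card := by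
    conv_lhs => rw [hFeq]
    exact Finset.card_biUnion (fun i _ j _ hij =>
      Finset.disjoint_of_subset_left Finset.inter_subset_right
        (Finset.disjoint_of_subset_right Finset.inter_subset_right (hdisj i j hij)))
  rw [hcard]
  exact Finset.sum_le_sum (fun i _ =>
    le_min (Finset.card_le_card Finset.inter_subset_right) (key i))
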